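/- In Lorentz–Minkowski space E₁³, if a C² regular lightlike curve lies on a pseudo-sphere S₁²(P; r) or on a light-cone C²(P), then it is a straight line. -/

import Mathlib

/-- The Lorentz–Minkowski inner product of index 1 on `ℝ³`. -/
noncomputable def mdot (x y : Fin 3 → ℝ) : ℝ := x 0 * y 0 + x 1 * y 1 - x 2 * y 2

/-- In `E₁³`, a `C²` regular lightlike curve lying on a pseudo-sphere `S₁²(P;r)` or
a light-cone `C²(P)` is a straight line. -/
theorem stmt11 (α : ℝ → Fin 3 → ℝ)
    (hα : ContDiff ℝ 2 α)
    (hreg : ∀ s, deriv α s ≠ 0)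
    (hlight : ∀ s, mdot (deriv α s) (deriv α s) = 0)
    (hsph : (∃ (P : Fin 3 → ℝ) (r : ℝ), 0 < r ∧ ∀ s, mdot (α s - P) (α s - P) = r ^ 2) ∨
            (∃ P : Fin 3 → ℝ, ∀ s, mdot (α s - P) (α s - P) = 0)) :
    ∃ (α₀ v : Fin 3 → ℝ) (f : ℝ → ℝ), ∀ s, α s = α₀ + f s • v := by
  -- component functions and their derivatives
  have hcomp : ∀ i, ContDiff ℝ 2 (fun s => α s i) := fun i => contDiff_pi.1 hα i
  have hdc : ∀ i, Differentiable ℝ (fun s => α s i) :=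
    fun i => (hcomp i).differentiable (by norm_num)
  set d : Fin 3 → ℝ → ℝ := fun i => deriv (fun s => α s i) with hd_def
  have hDa : ∀ i s, HasDerivAt (fun t => α t i) (d i s) s := fun i s => (hdc i s).hasDerivAt
  have hd_eq : ∀ i s, d i s = deriv α s i := by
    intro i s
    have h := (hα.differentiable (by norm_num) s).hasDerivAt
    exact (hasDerivAt_pi.1 h i).deriv
  have hd1 : ∀ i, ContDiff ℝ 1 (d i) := by
    intro i
    have h := hcomp i
    rw [show (2 : WithTop ℕ∞) = 1 + 1 from rfl, contDiff_succ_iff_deriv] at h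
    exact h.2.2
  have hddiff : ∀ i, Differentiable ℝ (d i) := fun i => (hd1 i).differentiable one_ne_zero
  have hDd : ∀ i s, HasDerivAt (d i) (deriv (d i) s) s := fun i s => (hddiff i s).hasDerivAt
  -- lightlike condition in components
  have hL : ∀ s, d 0 s * d 0 s + d 1 s * d 1 s - d 2 s * d 2 s = 0 := by
    intro s
    rw [hd_eq 0, hd_eq 1, hd_eq 2]
    simpa [mdot] using hlight s
  -- the third component of the derivative never vanishes
  have hz : ∀ s, d 2 s ≠ 0 := by
    intro s h2
    apply hreg s
    have h0 : d 0 s = 0 := by nlinarith [hL s, sq_nonneg (d 0 s), sq_nonneg (d 1 s)]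
    have h1 : d 1 s = 0 := by nlinarith [hL s, sq_nonneg (d 0 s), sq_nonneg (d 1 s)]
    funext i
    fin_cases i
    · show deriv α s 0 = 0
      rw [← hd_eq 0 s]; exact h0
    · show deriv α s 1 = 0
      rw [← hd_eq 1 s]; exact h1
    · show deriv α s 2 = 0
      rw [← hd_eq 2 s]; exact h2
  -- slopes
  set p : ℝ → ℝ := fun s => d 0 s / d 2 s with hp_def
  set q : ℝ → ℝ := fun s => d 1 s / d 2 s with hq_def
  have hp1 : ContDiff ℝ 1 p := (hd1 0).div (hd1 2) hz
  have hq1 : ContDiff ℝ 1 q := (hd1 1).div (hd1 2) hz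
  have hderp : ∀ s, HasDerivAt p ((deriv (d 0) s * d 2 s - d 0 s * deriv (d 2) s) / d 2 s ^ 2) s :=
    fun s => (hDd 0 s).div (hDd 2 s) (hz s)
  have hderq : ∀ s, HasDerivAt q ((deriv (d 1) s * d 2 s - d 1 s * deriv (d 2) s) / d 2 s ^ 2) s :=
    fun s => (hDd 1 s).div (hDd 2 s) (hz s)
  -- derivative of the lightlike identity
  have hE4 : ∀ s, d 0 s * deriv (d 0) s + d 1 s * deriv (d 1) s - d 2 s * deriv (d 2) s = 0 := by
    intro s
    have hgd : HasDerivAt (fun t => d 0 t * d 0 t + d 1 t * d 1 t - d 2 t * d 2 t)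
        (deriv (d 0) s * d 0 s + d 0 s * deriv (d 0) s +
          (deriv (d 1) s * d 1 s + d 1 s * deriv (d 1) s) -
          (deriv (d 2) s * d 2 s + d 2 s * deriv (d 2) s)) s :=
      (((hDd 0 s).mul (hDd 0 s)).add ((hDd 1 s).mul (hDd 1 s))).sub ((hDd 2 s).mul (hDd 2 s))
    have h0 : deriv (fun t => d 0 t * d 0 t + d 1 t * d 1 t - d 2 t * d 2 t) s = 0 := by
      rw [funext hL]; simp
    have := hgd.deriv
    rw [h0] at this
    linarith
  -- first and second derivative identities coming from lying on the quadric
  have hE13 : ∀ (P : Fin 3 → ℝ) (K : ℝ), (∀ s, mdot (α s - P) (α s - P) = K) → ∀ s,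
      ((α s 0 - P 0) * d 0 s + (α s 1 - P 1) * d 1 s - (α s 2 - P 2) * d 2 s = 0) ∧
      ((α s 0 - P 0) * deriv (d 0) s + (α s 1 - P 1) * deriv (d 1) s
        - (α s 2 - P 2) * deriv (d 2) s = 0) := by
    intro P K hS
    have hA : ∀ s, HasDerivAt (fun t => α t 0 - P 0) (d 0 s) s := fun s => (hDa 0 s).sub_const _
    have hB : ∀ s, HasDerivAt (fun t => α t 1 - P 1) (d 1 s) s := fun s => (hDa 1 s).sub_const _
    have hC : ∀ s, HasDerivAt (fun t => α t 2 - P 2) (d 2 s) s := fun s => (hDa 2 s).sub_const _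
    have hSc : ∀ s, (α s 0 - P 0) * (α s 0 - P 0) + (α s 1 - P 1) * (α s 1 - P 1)
        - (α s 2 - P 2) * (α s 2 - P 2) = K := by
      intro s; simpa [mdot] using hS s
    have hE1 : ∀ s, (α s 0 - P 0) * d 0 s + (α s 1 - P 1) * d 1 s
        - (α s 2 - P 2) * d 2 s = 0 := by
      intro s
      have hgd : HasDerivAt (fun t => (α t 0 - P 0) * (α t 0 - P 0)
          + (α t 1 - P 1) * (α t 1 - P 1) - (α t 2 - P 2) * (α t 2 - P 2))
          (d 0 s * (α s 0 - P 0) + (α s 0 - P 0) * d 0 s +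
            (d 1 s * (α s 1 - P 1) + (α s 1 - P 1) * d 1 s) -
            (d 2 s * (α s 2 - P 2) + (α s 2 - P 2) * d 2 s)) s :=
        (((hA s).mul (hA s)).add ((hB s).mul (hB s))).sub ((hC s).mul (hC s))
      have h0 : deriv (fun t => (α t 0 - P 0) * (α t 0 - P 0)
          + (α t 1 - P 1) * (α t 1 - P 1) - (α t 2 - P 2) * (α t 2 - P 2)) s = 0 := by
        rw [funext hSc]; simp
      have := hgd.deriv
      rw [h0] at this
      linarith
    intro s
    refine ⟨hE1 s, ?_⟩
    have hgd : HasDerivAt (fun t => (α t 0 - P 0) * d 0 t + (α t 1 - P 1) * d 1 t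
        - (α t 2 - P 2) * d 2 t)
        (d 0 s * d 0 s + (α s 0 - P 0) * deriv (d 0) s +
          (d 1 s * d 1 s + (α s 1 - P 1) * deriv (d 1) s) -
          (d 2 s * d 2 s + (α s 2 - P 2) * deriv (d 2) s)) s :=
      (((hA s).mul (hDd 0 s)).add ((hB s).mul (hDd 1 s))).sub ((hC s).mul (hDd 2 s))
    have h0 : deriv (fun t => (α t 0 - P 0) * d 0 t + (α t 1 - P 1) * d 1 t
        - (α t 2 - P 2) * d 2 t) s = 0 := by
      rw [funext hE1]; simp
    have h := hgd.deriv
    rw [h0] at h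
    have hLs := hL s
    linarith
  -- key step: the slopes have vanishing derivative everywhere
  have key : ∀ s, deriv p s = 0 ∧ deriv q s = 0 := by
    have keynum : ∀ s, (deriv (d 0) s * d 2 s - d 0 s * deriv (d 2) s = 0 ∧
        deriv (d 1) s * d 2 s - d 1 s * deriv (d 2) s = 0) →
        deriv p s = 0 ∧ deriv q s = 0 := by
      intro s ⟨h1, h2⟩
      constructor
      · rw [(hderp s).deriv, h1]; simp
      · rw [(hderq s).deriv, h2]; simp
    rcases hsph with ⟨P, r, hr, hS⟩ | ⟨P, hS⟩
    · -- pseudo-sphere case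
      intro s
      apply keynum s
      obtain ⟨hE1, hE3⟩ := hE13 P (r ^ 2) hS s
      have hSc : (α s 0 - P 0) * (α s 0 - P 0) + (α s 1 - P 1) * (α s 1 - P 1)
          - (α s 2 - P 2) * (α s 2 - P 2) = r ^ 2 := by simpa [mdot] using hS s
      set A := α s 0 - P 0
      set B := α s 1 - P 1
      set C := α s 2 - P 2
      set a := d 0 s
      set b := d 1 s
      set c := d 2 s
      set a' := deriv (d 0) s
      set b' := deriv (d 1) s
      set c' := deriv (d 2) s
      have hLs := hL s
      have hE4s := hE4 s
      have hdet : (A * b - B * a) ^ 2 = r ^ 2 * c ^ 2 := by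
        linear_combination c ^ 2 * hSc + (A ^ 2 + B ^ 2) * hLs - (A * a + B * b + C * c) * hE1
      have hdet_ne : A * b - B * a ≠ 0 := by
        intro h
        have hc := hz s
        have : r ^ 2 * c ^ 2 = 0 := by rw [← hdet, h]; ring
        rcases mul_eq_zero.1 this with h' | h'
        · exact (pow_ne_zero 2 hr.ne') h'
        · exact (pow_ne_zero 2 hc) h'
      have hAuBv : A * (a' * c - a * c') + B * (b' * c - b * c') = 0 := by
        linear_combination c * hE3 - c' * hE1
      have hauv : a * (a' * c - a * c') + b * (b' * c - b * c') = 0 := by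
        linear_combination c * hE4s - c' * hLs
      constructor
      · have hu : (a' * c - a * c') * (A * b - B * a) = 0 := by
          linear_combination b * hAuBv - B * hauv
        exact (mul_eq_zero.1 hu).resolve_right hdet_ne
      · have hv : (b' * c - b * c') * (A * b - B * a) = 0 := by
          linear_combination A * hauv - a * hAuBv
        exact (mul_eq_zero.1 hv).resolve_right hdet_ne
    · -- light-cone case
      -- proportionality on the cone
      have hprop : ∀ s, (α s 0 - P 0) * d 2 s = (α s 2 - P 2) * d 0 s ∧
          (α s 1 - P 1) * d 2 s = (α s 2 - P 2) * d 1 s := by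
        intro s
        obtain ⟨hE1, -⟩ := hE13 P 0 hS s
        have hSc : (α s 0 - P 0) * (α s 0 - P 0) + (α s 1 - P 1) * (α s 1 - P 1)
            - (α s 2 - P 2) * (α s 2 - P 2) = 0 := by simpa [mdot] using hS s
        have hLs := hL s
        have h0 : ((α s 0 - P 0) * d 2 s - (α s 2 - P 2) * d 0 s) ^ 2 +
            ((α s 1 - P 1) * d 2 s - (α s 2 - P 2) * d 1 s) ^ 2 = 0 := by
          linear_combination (d 2 s) ^ 2 * hSc + (α s 2 - P 2) ^ 2 * hLs
            - 2 * (α s 2 - P 2) * (d 2 s) * hE1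
        constructor
        · nlinarith [sq_nonneg ((α s 0 - P 0) * d 2 s - (α s 2 - P 2) * d 0 s),
            sq_nonneg ((α s 1 - P 1) * d 2 s - (α s 2 - P 2) * d 1 s)]
        · nlinarith [sq_nonneg ((α s 0 - P 0) * d 2 s - (α s 2 - P 2) * d 0 s),
            sq_nonneg ((α s 1 - P 1) * d 2 s - (α s 2 - P 2) * d 1 s)]
      -- derivative of the proportionality identities
      have hCa : ∀ s, (α s 0 - P 0) * deriv (d 2) s = (α s 2 - P 2) * deriv (d 0) s := by
        intro s
        have hgd : HasDerivAt (fun t => (α t 0 - P 0) * d 2 t - (α t 2 - P 2) * d 0 t)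
            (d 0 s * d 2 s + (α s 0 - P 0) * deriv (d 2) s -
              (d 2 s * d 0 s + (α s 2 - P 2) * deriv (d 0) s)) s :=
          (((hDa 0 s).sub_const _).mul (hDd 2 s)).sub (((hDa 2 s).sub_const _).mul (hDd 0 s))
        have h0 : deriv (fun t => (α t 0 - P 0) * d 2 t - (α t 2 - P 2) * d 0 t) s = 0 := by
          rw [show (fun t => (α t 0 - P 0) * d 2 t - (α t 2 - P 2) * d 0 t) = fun _ => 0 from
            funext fun t => by rw [(hprop t).1]; ring]
          simp
        have := hgd.deriv
        rw [h0] at this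
        linarith
      have hCb : ∀ s, (α s 1 - P 1) * deriv (d 2) s = (α s 2 - P 2) * deriv (d 1) s := by
        intro s
        have hgd : HasDerivAt (fun t => (α t 1 - P 1) * d 2 t - (α t 2 - P 2) * d 1 t)
            (d 1 s * d 2 s + (α s 1 - P 1) * deriv (d 2) s -
              (d 2 s * d 1 s + (α s 2 - P 2) * deriv (d 1) s)) s :=
          (((hDa 1 s).sub_const _).mul (hDd 2 s)).sub (((hDa 2 s).sub_const _).mul (hDd 1 s))
        have h0 : deriv (fun t => (α t 1 - P 1) * d 2 t - (α t 2 - P 2) * d 1 t) s = 0 := by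
          rw [show (fun t => (α t 1 - P 1) * d 2 t - (α t 2 - P 2) * d 1 t) = fun _ => 0 from
            funext fun t => by rw [(hprop t).2]; ring]
          simp
        have := hgd.deriv
        rw [h0] at this
        linarith
      -- vanishing of the slope derivatives off the vertex
      have hoff : ∀ t, α t 2 - P 2 ≠ 0 → deriv p t = 0 ∧ deriv q t = 0 := by
        intro t hC
        apply keynum t
        constructor
        · have h : (α t 2 - P 2) * (deriv (d 0) t * d 2 t - d 0 t * deriv (d 2) t) = 0 := by
            linear_combination (-(d 2 t)) * hCa t + (deriv (d 2) t) * (hprop t).1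
          exact (mul_eq_zero.1 h).resolve_left hC
        · have h : (α t 2 - P 2) * (deriv (d 1) t * d 2 t - d 1 t * deriv (d 2) t) = 0 := by
            linear_combination (-(d 2 t)) * hCb t + (deriv (d 2) t) * (hprop t).2
          exact (mul_eq_zero.1 h).resolve_left hC
      -- continuity of the slope derivatives
      have hpc : Continuous (deriv p) := (contDiff_one_iff_deriv.1 hp1).2
      have hqc : Continuous (deriv q) := (contDiff_one_iff_deriv.1 hq1).2
      intro s
      by_cases hC : α s 2 - P 2 ≠ 0
      · exact hoff s hC
      · push_neg at hC
        have hCd : HasDerivAt (fun t => α t 2 - P 2) (d 2 s) s := (hDa 2 s).sub_const _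
        have hev : ∀ᶠ t in nhdsWithin s {s}ᶜ, α t 2 - P 2 ≠ 0 := by
          filter_upwards [hCd.eventually_ne (c := α s 2 - P 2) (hz s)] with t ht
          rw [hC] at ht; exact ht
        constructor
        · have h1 : Filter.Tendsto (deriv p) (nhdsWithin s {s}ᶜ) (nhds (deriv p s)) :=
            (hpc.continuousAt.tendsto).mono_left nhdsWithin_le_nhds
          have h2 : Filter.Tendsto (deriv p) (nhdsWithin s {s}ᶜ) (nhds 0) := by
            refine Filter.Tendsto.congr' ?_ tendsto_const_nhds
            filter_upwards [hev] with t ht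
            exact ((hoff t ht).1).symm
          exact tendsto_nhds_unique h1 h2
        · have h1 : Filter.Tendsto (deriv q) (nhdsWithin s {s}ᶜ) (nhds (deriv q s)) :=
            (hqc.continuousAt.tendsto).mono_left nhdsWithin_le_nhds
          have h2 : Filter.Tendsto (deriv q) (nhdsWithin s {s}ᶜ) (nhds 0) := by
            refine Filter.Tendsto.congr' ?_ tendsto_const_nhds
            filter_upwards [hev] with t ht
            exact ((hoff t ht).2).symm
          exact tendsto_nhds_unique h1 h2
  -- hence the slopes are constant
  have hpdiff : Differentiable ℝ p := hp1.differentiable one_ne_zero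
  have hqdiff : Differentiable ℝ q := hq1.differentiable one_ne_zero
  have hpconst : ∀ s, p s = p 0 :=
    fun s => is_const_of_deriv_eq_zero hpdiff (fun t => (key t).1) s 0
  have hqconst : ∀ s, q s = q 0 :=
    fun s => is_const_of_deriv_eq_zero hqdiff (fun t => (key t).2) s 0
  -- the direction vector
  refine ⟨α 0, ![p 0, q 0, 1], fun s => α s 2 - α 0 2, fun s => ?_⟩
  have hvd : ∀ i t, d i t = d 2 t * (![p 0, q 0, (1:ℝ)]) i := by
    intro i t
    fin_cases i
    · show d 0 t = d 2 t * (![p 0, q 0, (1:ℝ)] 0)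
      rw [Matrix.cons_val_zero]
      show d 0 t = d 2 t * (d 0 0 / d 2 0)
      have h : d 0 t / d 2 t = d 0 0 / d 2 0 := hpconst t
      rw [div_eq_div_iff (hz t) (hz 0)] at h
      rw [← mul_div_assoc, eq_div_iff (hz 0)]
      linear_combination h
    · show d 1 t = d 2 t * (![p 0, q 0, (1:ℝ)] 1)
      rw [Matrix.cons_val_one, Matrix.cons_val_zero]
      show d 1 t = d 2 t * (d 1 0 / d 2 0)
      have h : d 1 t / d 2 t = d 1 0 / d 2 0 := hqconst t
      rw [div_eq_div_iff (hz t) (hz 0)] at h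
      rw [← mul_div_assoc, eq_div_iff (hz 0)]
      linear_combination h
    · show d 2 t = d 2 t * (![p 0, q 0, (1:ℝ)] 2)
      simp
  funext i
  have hgi : ∀ t, α t i - (α t 2 - α 0 2) * (![p 0, q 0, (1:ℝ)]) i = α 0 i := by
    have hdiffg : Differentiable ℝ (fun t => α t i - (α t 2 - α 0 2) * (![p 0, q 0, (1:ℝ)]) i) :=
      (hdc i).sub (((hdc 2).sub_const _).mul_const _)
    have hder0 : ∀ t, deriv (fun t => α t i - (α t 2 - α 0 2) * (![p 0, q 0, (1:ℝ)]) i) t = 0 := by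
      intro t
      have hgd : HasDerivAt (fun t => α t i - (α t 2 - α 0 2) * (![p 0, q 0, (1:ℝ)]) i)
          (d i t - d 2 t * (![p 0, q 0, (1:ℝ)]) i) t :=
        (hDa i t).sub (((hDa 2 t).sub_const _).mul_const _)
      rw [hgd.deriv, hvd i t]; ring
    intro t
    have := is_const_of_deriv_eq_zero hdiffg hder0 t 0
    simpa using this
  have := hgi s
  simp only [Pi.add_apply, Pi.smul_apply, smul_eq_mul]
  linarith
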